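/- Let D be a domain and P a finitely generated prime ideal of D that is a minimal prime over a nonzero principal ideal. Let R ⊆ D^E be a divisible ring of functions from E to D. Then every prime ideal Q of R with Q ∩ D = P (intersection taken with the constant functions) contains R(E,P) = {f ∈ R : f(E) ⊆ P}. -/

import Mathlib

/-- Key algebraic lemma: if `P` is f.g. and minimal over `(p)`, then some power of `P`
is sent into `(p)` by multiplication by an element outside `P`. -/
theorem stmt19_aux {D : Type*} [CommRing D] [IsDomain D]
    (P : Ideal D) (hfg : P.FG) (hprime : P.IsPrime)
    {p : D} (hP : P ∈ (Ideal.span {p}).minimalPrimes) :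
    ∃ n : ℕ, 0 < n ∧ ∃ s : D, s ∉ P ∧ ∀ x ∈ P ^ n, s * x ∈ Ideal.span {p} := by
  classical
  set A := Localization.AtPrime P
  set φ := algebraMap D A with hφ
  have hm : Ideal.map φ P = IsLocalRing.maximalIdeal A :=
    Localization.AtPrime.map_eq_maximalIdeal
  -- the maximal ideal is contained in the radical of (φ p)
  have hrad : IsLocalRing.maximalIdeal A ≤ (Ideal.map φ (Ideal.span {p})).radical := by
    rw [Ideal.radical_eq_sInf]
    refine le_sInf ?_
    rintro J ⟨hJle, hJprime⟩
    have hcom : (J.comap φ).IsPrime := hJprime.comap φ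
    have hJm : J ≤ IsLocalRing.maximalIdeal A := IsLocalRing.le_maximalIdeal hJprime.ne_top
    have h1 : J.comap φ ≤ P := by
      have := Ideal.comap_mono (f := φ) hJm
      exact this.trans (Localization.AtPrime.under_maximalIdeal (I := P)).le
    have h2 : Ideal.span {p} ≤ J.comap φ := by
      rw [Ideal.span_le, Set.singleton_subset_iff]
      exact Ideal.mem_comap.mpr (hJle (Ideal.mem_map_of_mem φ (Ideal.subset_span rfl)))
    have : P ≤ J.comap φ := hP.2 ⟨hcom, h2⟩ h1
    calc IsLocalRing.maximalIdeal A = Ideal.map φ P := hm.symm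
      _ ≤ Ideal.map φ (J.comap φ) := Ideal.map_mono this
      _ ≤ J := Ideal.map_comap_le
  have hmfg : (IsLocalRing.maximalIdeal A).FG := hm ▸ hfg.map φ
  obtain ⟨n, hn⟩ := Ideal.exists_pow_le_of_le_radical_of_fg hrad hmfg
  refine ⟨n + 1, Nat.succ_pos n, ?_⟩
  have hpow : (IsLocalRing.maximalIdeal A) ^ (n + 1) ≤ Ideal.map φ (Ideal.span {p}) :=
    le_trans (Ideal.pow_le_pow_right (Nat.le_succ n)) hn
  -- every element of P^(n+1) is sent into (p) after multiplying by something outside P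
  have key : ∀ t ∈ P ^ (n + 1), ∃ s ∈ P.primeCompl, s * t ∈ Ideal.span {p} := by
    intro t ht
    have h1 : φ t ∈ (IsLocalRing.maximalIdeal A) ^ (n + 1) := by
      rw [← hm, ← Ideal.map_pow]
      exact Ideal.mem_map_of_mem φ ht
    have h2 : φ t ∈ Ideal.map φ (Ideal.span {p}) := hpow h1
    have h3 : IsLocalization.mk' A t (1 : P.primeCompl) ∈ Ideal.map φ (Ideal.span {p}) := by
      rwa [IsLocalization.mk'_one]
    rw [IsLocalization.mk'_mem_map_algebraMap_iff P.primeCompl] at h3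
    exact h3
  -- get a uniform s using the generators of P^(n+1)
  obtain ⟨T, hT⟩ := Submodule.FG.pow hfg (n + 1)
  choose! sfun hsmem hsmul using key
  refine ⟨∏ t ∈ T, sfun t, ?_, ?_⟩
  · exact Submonoid.prod_mem P.primeCompl (fun t ht => hsmem t (hT ▸ Ideal.subset_span ht))
  · intro x hx
    rw [← hT] at hx
    induction hx using Submodule.span_induction with
    | mem t ht =>
      have htP : t ∈ P ^ (n + 1) := hT ▸ Ideal.subset_span ht
      have : (∏ u ∈ T.erase t, sfun u) * (sfun t * t) ∈ Ideal.span {p} :=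
        Ideal.mul_mem_left _ _ (hsmul t htP)
      rwa [← mul_assoc, Finset.prod_erase_mul T _ ht] at this
    | zero => simp
    | add a b _ _ ha hb => rw [mul_add]; exact Ideal.add_mem _ ha hb
    | smul c a _ ha =>
      rw [smul_eq_mul, mul_comm c a, ← mul_assoc]
      exact Ideal.mul_mem_right _ _ ha

theorem stmt19 {D : Type*} [CommRing D] [IsDomain D] {E : Set D}
    (R : Subring (↥E → D)) (hconst : ∀ d : D, (fun _ : ↥E => d) ∈ R)
    (hdiv : ∀ f ∈ R, ∀ c : D, c ≠ 0 → (∀ e : ↥E, f e ∈ Ideal.span {c}) →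
      ∀ g : ↥E → D, (∀ e : ↥E, c * g e = f e) → g ∈ R)
    (P : Ideal D) (hfg : P.FG) (hprime : P.IsPrime)
    (hmin : ∃ p : D, p ≠ 0 ∧ P ∈ (Ideal.span {p}).minimalPrimes)
    (Q : Ideal R) (hQ : Q.IsPrime)
    (hQP : ∀ d : D, (⟨fun _ : ↥E => d, hconst d⟩ : R) ∈ Q ↔ d ∈ P) :
    ∀ f : R, (∀ e : ↥E, (f : ↥E → D) e ∈ P) → f ∈ Q := by
  classical
  obtain ⟨p, hp0, hP⟩ := hmin
  obtain ⟨n, hnpos, s, hsP, hs⟩ := stmt19_aux P hfg hprime hP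
  intro f hf
  set cs : R := ⟨fun _ => s, hconst s⟩ with hcs
  set F : R := cs * f ^ n with hF
  have hFval : ∀ e : ↥E, (F : ↥E → D) e = s * ((f : ↥E → D) e) ^ n := by
    intro e; simp [hF, hcs]
  have hFspan : ∀ e : ↥E, (F : ↥E → D) e ∈ Ideal.span {p} := by
    intro e
    rw [hFval e]
    exact hs _ (Ideal.pow_mem_pow (hf e) n)
  have hdvd : ∀ e : ↥E, ∃ d : D, p * d = (F : ↥E → D) e := by
    intro e
    obtain ⟨d, hd⟩ := Ideal.mem_span_singleton.mp (hFspan e)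
    exact ⟨d, hd.symm⟩
  choose g hg using hdvd
  have hgR : g ∈ R := hdiv (F : ↥E → D) F.2 p hp0 hFspan g hg
  have hpP : p ∈ P := hP.1.2 (Ideal.subset_span rfl)
  have hpQ : (⟨fun _ => p, hconst p⟩ : R) ∈ Q := (hQP p).mpr hpP
  have hEq : (⟨fun _ => p, hconst p⟩ : R) * ⟨g, hgR⟩ = F := by
    apply Subtype.ext
    funext e
    exact hg e
  have hFQ : F ∈ Q := hEq ▸ Q.mul_mem_right _ hpQ
  rcases hQ.mem_or_mem hFQ with hcsQ | hfnQ
  · exact absurd ((hQP s).mp hcsQ) hsP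
  · exact (hQ.pow_mem_iff_mem n hnpos).mp hfnQ
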